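/- Let p be a prime, 0 ≤ n < m, k ≥ 1, and let χ1,…,χk be characters mod p^m with χ_k primitive mod p^m. Suppose χ1⋯χk is induced by a character ψ mod p^{m−n}. Then J_{p^n}(χ1,…,χk,p^m) = p^n · (conj G(ψ, p^{m−n}) / conj G(χ_k, p^m)) · ∏_{i=1}^{k−1} G(χ_i, p^m), where conj denotes complex conjugation. -/

import Mathlib

open Complex

/-- The generalized Jacobi sum `J_B(χ₁,…,χ_k, q)`. -/
noncomputable def Jsum {q : ℕ} [NeZero q] {k : ℕ}
    (χ : Fin k → DirichletCharacter ℂ q) (B : ZMod q) : ℂ :=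
  ∑ x : Fin k → ZMod q, if (∑ i, x i) = B then ∏ i, χ i (x i) else 0

/-- The Gauss sum `G(χ,q) = ∑_{x mod q} χ(x) e^{2πi x/q}`. -/
noncomputable def Gsum {q : ℕ} [NeZero q] (χ : DirichletCharacter ℂ q) : ℂ :=
  ∑ x : ZMod q, χ x * Complex.exp (2 * Real.pi * Complex.I * (x.val : ℂ) / q)

namespace Stmt13Aux

variable {N : ℕ} [NeZero N]

lemma gsum_eq (χ : DirichletCharacter ℂ N) : Gsum χ = gaussSum χ ZMod.stdAddChar := by
  refine Finset.sum_congr rfl fun x _ => ?_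
  rw [ZMod.stdAddChar_apply, ZMod.toCircle_apply]

lemma conj_stdAddChar (x : ZMod N) :
    (starRingEnd ℂ) (ZMod.stdAddChar x) = ZMod.stdAddChar (-x) := by
  have hx : x = ((x.val : ℤ) : ZMod N) := by push_cast [ZMod.natCast_zmod_val]; rfl
  rw [hx, ← Int.cast_neg, ZMod.stdAddChar_coe, ZMod.stdAddChar_coe, ← Complex.exp_conj]
  congr 1
  simp only [map_div₀, map_mul, Complex.conj_I, map_ofNat, Complex.conj_ofReal,
    map_intCast, map_natCast]
  push_cast
  ring

lemma conj_gsum (χ : DirichletCharacter ℂ N) :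
    (starRingEnd ℂ) (Gsum χ) = ∑ x : ZMod N, (starRingEnd ℂ) (χ x) * ZMod.stdAddChar (-x) := by
  rw [gsum_eq, gaussSum, map_sum]
  simp_rw [map_mul, conj_stdAddChar]

lemma conj_char (χ : DirichletCharacter ℂ N) (a : ZMod N) :
    (starRingEnd ℂ) (χ a) = χ⁻¹ a := by
  rw [starRingEnd_apply, MulChar.star_apply']

lemma gsum_mul_conj {χ : DirichletCharacter ℂ N} (hχ : χ.IsPrimitive) :
    Gsum χ * (starRingEnd ℂ) (Gsum χ) = N := by
  classical
  rw [conj_gsum, Finset.mul_sum]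
  have h1 : ∀ y : ZMod N, Gsum χ * ((starRingEnd ℂ) (χ y) * ZMod.stdAddChar (-y)) =
      ∑ x : ZMod N, χ x * ZMod.stdAddChar (x * y - y) := by
    intro y
    rw [conj_char, mul_left_comm, ← mul_assoc, gsum_eq,
      ← gaussSum_mulShift_of_isPrimitive ZMod.stdAddChar hχ y, gaussSum, Finset.sum_mul]
    refine Finset.sum_congr rfl fun x _ => ?_
    rw [AddChar.mulShift_apply, mul_assoc, ← AddChar.map_add_eq_mul]
    ring_nf
  simp_rw [h1]
  rw [Finset.sum_comm]
  have h2 : ∀ x : ZMod N, ∑ y : ZMod N, χ x * ZMod.stdAddChar (x * y - y) =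
      χ x * (if x - 1 = 0 then (N : ℂ) else 0) := by
    intro x
    rw [← Finset.mul_sum]
    congr 1
    have := AddChar.sum_mulShift (ψ := ZMod.stdAddChar (N := N)) (x - 1)
      (ZMod.isPrimitive_stdAddChar N)
    simp only [ZMod.card] at this
    push_cast [apply_ite (Nat.cast : ℕ → ℂ)] at this
    rw [← this]
    refine Finset.sum_congr rfl fun y _ => ?_
    ring_nf
  simp_rw [h2, sub_eq_zero, mul_ite, mul_zero]
  rw [Finset.sum_ite_eq' Finset.univ (1 : ZMod N)]
  simp


lemma addchar_map_sum {ι : Type*} (ψ : AddChar (ZMod N) ℂ) (s : Finset ι) (f : ι → ZMod N) :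
    ψ (∑ i ∈ s, f i) = ∏ i ∈ s, ψ (f i) := by
  classical
  induction s using Finset.cons_induction with
  | empty => simp
  | cons i s hi ih => rw [Finset.sum_cons, Finset.prod_cons, AddChar.map_add_eq_mul, ih]

lemma mulchar_prod_apply_isUnit {ι : Type*} (s : Finset ι) (χ : ι → DirichletCharacter ℂ N)
    {a : ZMod N} (ha : IsUnit a) : (∏ i ∈ s, χ i) a = ∏ i ∈ s, χ i a := by
  classical
  induction s using Finset.cons_induction with
  | empty => simp [MulChar.one_apply ha]
  | cons i s hi ih => rw [Finset.prod_cons, Finset.prod_cons, ← ih]; rfl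

lemma mulchar_prod_apply {k : ℕ} (χ : Fin (k + 1) → DirichletCharacter ℂ N) (a : ZMod N) :
    (∏ i, χ i) a = ∏ i, χ i a := by
  by_cases ha : IsUnit a
  · exact mulchar_prod_apply_isUnit _ _ ha
  · rw [MulChar.map_nonunit _ ha]
    exact (Finset.prod_eq_zero (Finset.mem_univ (0 : Fin (k + 1))) (show (χ 0) a = 0 from MulChar.map_nonunit _ ha)).symm

lemma reindex_zmod (M : ℕ) [NeZero M] (F : ZMod M → ℂ) :
    ∑ t : ZMod M, F t = ∑ j ∈ Finset.range M, F (j : ZMod M) := by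
  refine Finset.sum_nbij' (fun t => t.val) (fun j => (j : ZMod M)) ?_ ?_ ?_ ?_ ?_
  · exact fun t _ => Finset.mem_range.2 (ZMod.val_lt t)
  · exact fun j _ => Finset.mem_univ _
  · exact fun t _ => ZMod.natCast_zmod_val t
  · exact fun j hj => ZMod.val_natCast_of_lt (Finset.mem_range.1 hj)
  · exact fun t _ => by rw [ZMod.natCast_zmod_val]


variable {p m n : ℕ}

lemma isUnit_of_cast (hp : p.Prime) (hnm : n < m) [NeZero (p ^ m)] [NeZero (p ^ (m - n))]
    {t : ZMod (p ^ m)}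
    (h : IsUnit (ZMod.castHom (pow_dvd_pow p (Nat.sub_le m n)) (ZMod (p ^ (m - n))) t)) :
    IsUnit t := by
  have ht : t = ((t.val : ℕ) : ZMod (p ^ m)) := (ZMod.natCast_zmod_val t).symm
  rw [ht, map_natCast] at h
  rw [ZMod.isUnit_iff_coprime] at h
  rw [ht, ZMod.isUnit_iff_coprime]
  rw [Nat.coprime_pow_right_iff (Nat.sub_pos_of_lt hnm)] at h
  exact h.pow_right _

lemma changeLevel_apply' (hp : p.Prime) (hnm : n < m) [NeZero (p ^ m)] [NeZero (p ^ (m - n))]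
    (ψ : DirichletCharacter ℂ (p ^ (m - n))) (t : ZMod (p ^ m)) :
    DirichletCharacter.changeLevel (pow_dvd_pow p (Nat.sub_le m n)) ψ t =
      ψ (ZMod.castHom (pow_dvd_pow p (Nat.sub_le m n)) (ZMod (p ^ (m - n))) t) := by
  by_cases ht : IsUnit t
  · have := DirichletCharacter.changeLevel_eq_cast_of_dvd ψ (pow_dvd_pow p (Nat.sub_le m n))
      ht.unit
    rw [ZMod.castHom_apply]; rwa [IsUnit.unit_spec] at this
  · rw [MulChar.map_nonunit _ ht, MulChar.map_nonunit]
    exact fun h => ht (isUnit_of_cast hp hnm h)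


lemma sum_conj (hp : p.Prime) (hnm : n < m) [NeZero (p ^ m)] [NeZero (p ^ (m - n))]
    (ψ : DirichletCharacter ℂ (p ^ (m - n))) :
    ∑ t : ZMod (p ^ m),
        (starRingEnd ℂ) (ψ (ZMod.castHom (pow_dvd_pow p (Nat.sub_le m n))
            (ZMod (p ^ (m - n))) t)) *
          ZMod.stdAddChar (-(t * ((p ^ n : ℕ) : ZMod (p ^ m)))) =
      (p : ℂ) ^ n * (starRingEnd ℂ) (Gsum ψ) := by
  classical
  have hQ0 : 0 < p ^ (m - n) := Nat.pos_of_ne_zero (NeZero.ne _)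
  have hmQ : p ^ m = p ^ (m - n) * p ^ n := by
    rw [← pow_add, Nat.sub_add_cancel hnm.le]
  rw [reindex_zmod]
  have hsplit : ∀ (F : ℕ → ℂ), ∑ j ∈ Finset.range (p ^ m), F j =
      ∑ a ∈ Finset.range (p ^ n), ∑ b ∈ Finset.range (p ^ (m - n)),
        F (p ^ (m - n) * a + b) := by
    intro F
    rw [← Finset.sum_product']
    refine Finset.sum_nbij' (fun j => (j / p ^ (m - n), j % p ^ (m - n)))
      (fun x => p ^ (m - n) * x.1 + x.2) ?_ ?_ ?_ ?_ ?_
    · intro j hj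
      rw [Finset.mem_range, hmQ] at hj
      refine Finset.mem_product.2 ⟨Finset.mem_range.2 ?_, Finset.mem_range.2 (Nat.mod_lt _ hQ0)⟩
      rwa [Nat.div_lt_iff_lt_mul hQ0, mul_comm]
    · intro x hx
      rw [Finset.mem_product, Finset.mem_range, Finset.mem_range] at hx
      rw [Finset.mem_range, hmQ]
      calc p ^ (m - n) * x.1 + x.2 < p ^ (m - n) * x.1 + p ^ (m - n) := by omega
        _ = p ^ (m - n) * (x.1 + 1) := by ring
        _ ≤ p ^ (m - n) * p ^ n := Nat.mul_le_mul_left _ (by omega)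
    · exact fun j _ => Nat.div_add_mod j _
    · intro x hx
      rw [Finset.mem_product, Finset.mem_range, Finset.mem_range] at hx
      have h1 : (p ^ (m - n) * x.1 + x.2) / p ^ (m - n) = x.1 := by
        rw [Nat.mul_add_div hQ0, Nat.div_eq_of_lt hx.2, add_zero]
      have h2 : (p ^ (m - n) * x.1 + x.2) % p ^ (m - n) = x.2 := by
        rw [Nat.mul_add_mod, Nat.mod_eq_of_lt hx.2]
      show ((p ^ (m - n) * x.1 + x.2) / p ^ (m - n), (p ^ (m - n) * x.1 + x.2) % p ^ (m - n)) = x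
      rw [h1, h2]
    · exact fun j _ => by rw [Nat.div_add_mod]
  rw [hsplit]
  have hterm : ∀ a ∈ Finset.range (p ^ n), ∀ b ∈ Finset.range (p ^ (m - n)),
      (starRingEnd ℂ) (ψ (ZMod.castHom (pow_dvd_pow p (Nat.sub_le m n))
          (ZMod (p ^ (m - n))) ((p ^ (m - n) * a + b : ℕ) : ZMod (p ^ m)))) *
        ZMod.stdAddChar (-(((p ^ (m - n) * a + b : ℕ) : ZMod (p ^ m)) *
          ((p ^ n : ℕ) : ZMod (p ^ m)))) =
      (starRingEnd ℂ) (ψ ((b : ℕ) : ZMod (p ^ (m - n)))) *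
        ZMod.stdAddChar (-((b : ℕ) : ZMod (p ^ (m - n)))) := by
    intro a _ b _
    have hp0 : (p : ℂ) ≠ 0 := Nat.cast_ne_zero.2 hp.pos.ne'
    congr 1
    · congr 1
      rw [map_natCast]
      rw [Nat.cast_add, Nat.cast_mul, ZMod.natCast_self, zero_mul, zero_add]
    · have harg1 : -(((p ^ (m - n) * a + b : ℕ) : ZMod (p ^ m)) * ((p ^ n : ℕ) : ZMod (p ^ m))) =
          ((((-((p ^ (m - n) * a + b) * p ^ n) : ℤ)) : ℤ) : ZMod (p ^ m)) := by push_cast; ring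
      have harg2 : -((b : ℕ) : ZMod (p ^ (m - n))) = (((-b : ℤ) : ℤ) : ZMod (p ^ (m - n))) := by
        push_cast; ring
      rw [harg1, harg2, ZMod.stdAddChar_coe, ZMod.stdAddChar_coe]
      have hcast : ((p ^ m : ℕ) : ℂ) = ((p ^ (m - n) : ℕ) : ℂ) * (p : ℂ) ^ n := by
        rw [hmQ]; push_cast; ring
      have hQC : ((p : ℂ)) ^ (m - n) ≠ 0 := pow_ne_zero _ hp0
      have hpn : ((p : ℂ)) ^ n ≠ 0 := pow_ne_zero _ hp0
      have hsplitexp : Complex.exp (2 * (Real.pi : ℂ) * I *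
            (((-((p ^ (m - n) * a + b) * p ^ n) : ℤ)) : ℂ) / ((p ^ m : ℕ) : ℂ)) =
          Complex.exp ((((-(a : ℤ) : ℤ)) : ℂ) * (2 * (Real.pi : ℂ) * I)) *
            Complex.exp (2 * (Real.pi : ℂ) * I * (((-b : ℤ) : ℤ) : ℂ) /
              ((p ^ (m - n) : ℕ) : ℂ)) := by
        rw [← Complex.exp_add]
        congr 1
        rw [hcast]
        push_cast
        field_simp
        ring
      rw [hsplitexp, Complex.exp_int_mul_two_pi_mul_I, one_mul]
  refine (Finset.sum_congr rfl fun a ha =>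
    Finset.sum_congr rfl fun b hb => hterm a ha b hb).trans ?_
  rw [Finset.sum_const, Finset.card_range, nsmul_eq_mul]
  have hS : (∑ b ∈ Finset.range (p ^ (m - n)),
      (starRingEnd ℂ) (ψ ((b : ℕ) : ZMod (p ^ (m - n)))) *
        ZMod.stdAddChar (-((b : ℕ) : ZMod (p ^ (m - n))))) = (starRingEnd ℂ) (Gsum ψ) := by
    rw [conj_gsum, reindex_zmod (p ^ (m - n))]
  rw [hS]
  push_cast
  ring

end Stmt13Aux

/-- Here the `k+1 ≥ 1` characters are `χ 0, …, χ (Fin.last k)`, the last one,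
`χ (Fin.last k)`, being primitive. -/
theorem stmt13 {p m n k : ℕ} [NeZero (p ^ m)] [NeZero (p ^ (m - n))]
    (hp : p.Prime) (hnm : n < m)
    (χ : Fin (k + 1) → DirichletCharacter ℂ (p ^ m))
    (hlast : (χ (Fin.last k)).IsPrimitive)
    -- χ₁⋯χ_k is induced by a character ψ mod p^(m-n)
    (ψ : DirichletCharacter ℂ (p ^ (m - n)))
    (hind : ∏ i, χ i = DirichletCharacter.changeLevel
      (pow_dvd_pow p (Nat.sub_le m n)) ψ) :
    Jsum χ ((p ^ n : ℕ) : ZMod (p ^ m)) =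
      (p : ℂ) ^ n *
        ((starRingEnd ℂ) (Gsum ψ) / (starRingEnd ℂ) (Gsum (χ (Fin.last k)))) *
        ∏ i : Fin k, Gsum (χ i.castSucc) := by
  classical
  have hq0 : ((p ^ m : ℕ) : ℂ) ≠ 0 := Nat.cast_ne_zero.2 (NeZero.ne _)
  -- Step A: Fourier expansion
  have expand : ((p ^ m : ℕ) : ℂ) * Jsum χ ((p ^ n : ℕ) : ZMod (p ^ m)) =
      ∑ t : ZMod (p ^ m), ZMod.stdAddChar (-(t * ((p ^ n : ℕ) : ZMod (p ^ m)))) *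
        ∏ i, gaussSum (χ i) (ZMod.stdAddChar.mulShift t) := by
    have h1 : ∀ t : ZMod (p ^ m), ∏ i, gaussSum (χ i) (ZMod.stdAddChar.mulShift t) =
        ∑ x : Fin (k + 1) → ZMod (p ^ m), ∏ i, (χ i (x i) * ZMod.stdAddChar (t * x i)) := by
      intro t
      simp only [gaussSum, AddChar.mulShift_apply]
      rw [Finset.prod_univ_sum, Fintype.piFinset_univ]
    have h2 : ∀ x : Fin (k + 1) → ZMod (p ^ m),
        (∑ t : ZMod (p ^ m), ZMod.stdAddChar (-(t * ((p ^ n : ℕ) : ZMod (p ^ m)))) *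
          ∏ i, (χ i (x i) * ZMod.stdAddChar (t * x i))) =
        (∏ i, χ i (x i)) *
          (if (∑ i, x i) = ((p ^ n : ℕ) : ZMod (p ^ m)) then ((p ^ m : ℕ) : ℂ) else 0) := by
      intro x
      have h3 : ∀ t : ZMod (p ^ m),
          ZMod.stdAddChar (-(t * ((p ^ n : ℕ) : ZMod (p ^ m)))) *
            ∏ i, (χ i (x i) * ZMod.stdAddChar (t * x i)) =
          (∏ i, χ i (x i)) *
            ZMod.stdAddChar (t * ((∑ i, x i) - ((p ^ n : ℕ) : ZMod (p ^ m)))) := by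
        intro t
        rw [Finset.prod_mul_distrib, ← Stmt13Aux.addchar_map_sum, ← Finset.mul_sum,
          mul_left_comm]
        congr 1
        rw [← AddChar.map_add_eq_mul]
        congr 1
        ring
      rw [Finset.sum_congr rfl fun t _ => h3 t, ← Finset.mul_sum]
      congr 1
      rw [AddChar.sum_mulShift _ (ZMod.isPrimitive_stdAddChar _)]
      simp [ZMod.card, sub_eq_zero]
    conv_rhs => simp only [h1, Finset.mul_sum]
    rw [Finset.sum_comm, Finset.sum_congr rfl fun x _ => h2 x, Jsum, Finset.mul_sum]
    refine Finset.sum_congr rfl fun x _ => ?_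
    by_cases hx : (∑ i, x i) = ((p ^ n : ℕ) : ZMod (p ^ m)) <;> simp [hx, mul_comm]
  -- Step B
  have hstep : ∀ t : ZMod (p ^ m), ∏ i, gaussSum (χ i) (ZMod.stdAddChar.mulShift t) =
      (∏ i, (χ i)⁻¹ t) * ∏ i, gaussSum (χ i) ZMod.stdAddChar := by
    intro t
    by_cases ht : IsUnit t
    · rw [← Finset.prod_mul_distrib]
      refine Finset.prod_congr rfl fun i _ => ?_
      have h := gaussSum_mulShift (χ i) ZMod.stdAddChar ht.unit
      rw [IsUnit.unit_spec] at h
      have hne : χ i t ≠ 0 := (ht.map (χ i)).ne_zero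
      rw [MulChar.inv_apply_eq_inv, Ring.inverse_eq_inv', ← h, inv_mul_cancel_left₀ hne]
    · have hz1 : gaussSum (χ (Fin.last k)) (ZMod.stdAddChar.mulShift t) = 0 := by
        rw [gaussSum_mulShift_of_isPrimitive ZMod.stdAddChar hlast t,
          MulChar.map_nonunit _ ht, zero_mul]
      have hz2 : ((χ (Fin.last k))⁻¹) t = 0 := MulChar.map_nonunit _ ht
      rw [Finset.prod_eq_zero (Finset.mem_univ (Fin.last k)) hz1,
        Finset.prod_eq_zero (Finset.mem_univ (Fin.last k)) hz2, zero_mul]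
  -- Step D
  have hD : ∀ t : ZMod (p ^ m), (∏ i, (χ i)⁻¹ t) =
      (starRingEnd ℂ) (ψ (ZMod.castHom (pow_dvd_pow p (Nat.sub_le m n))
        (ZMod (p ^ (m - n))) t)) := by
    intro t
    rw [Finset.prod_congr rfl fun i _ => (Stmt13Aux.conj_char (χ i) t).symm, ← map_prod,
      ← Stmt13Aux.mulchar_prod_apply, hind, Stmt13Aux.changeLevel_apply' hp hnm]
  -- Combine
  have main : ((p ^ m : ℕ) : ℂ) * Jsum χ ((p ^ n : ℕ) : ZMod (p ^ m)) =
      ((p : ℂ) ^ n * (starRingEnd ℂ) (Gsum ψ)) * ∏ i, gaussSum (χ i) ZMod.stdAddChar := by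
    rw [expand, Finset.sum_congr rfl fun t _ => by rw [hstep t, hD t]]
    have hre : ∀ t : ZMod (p ^ m),
        ZMod.stdAddChar (-(t * ((p ^ n : ℕ) : ZMod (p ^ m)))) *
          ((starRingEnd ℂ) (ψ (ZMod.castHom (pow_dvd_pow p (Nat.sub_le m n))
              (ZMod (p ^ (m - n))) t)) * ∏ i, gaussSum (χ i) ZMod.stdAddChar) =
        ((starRingEnd ℂ) (ψ (ZMod.castHom (pow_dvd_pow p (Nat.sub_le m n))
            (ZMod (p ^ (m - n))) t)) *
          ZMod.stdAddChar (-(t * ((p ^ n : ℕ) : ZMod (p ^ m))))) *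
          ∏ i, gaussSum (χ i) ZMod.stdAddChar := fun t => by ring
    rw [Finset.sum_congr rfl fun t _ => hre t, ← Finset.sum_mul,
      Stmt13Aux.sum_conj hp hnm ψ]
  have hlastG : Gsum (χ (Fin.last k)) * (starRingEnd ℂ) (Gsum (χ (Fin.last k))) =
      ((p ^ m : ℕ) : ℂ) := Stmt13Aux.gsum_mul_conj hlast
  have hconj_ne : (starRingEnd ℂ) (Gsum (χ (Fin.last k))) ≠ 0 := by
    intro h
    rw [h, mul_zero] at hlastG
    exact hq0 hlastG.symm
  refine mul_left_cancel₀ hq0 ?_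
  rw [main, Fin.prod_univ_castSucc fun i => gaussSum (χ i) ZMod.stdAddChar]
  simp only [← Stmt13Aux.gsum_eq]
  rw [← hlastG]
  field_simp
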